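/- arXiv:2106.08041 — 2 statements merged into one kernel-verified Lean document; each statement's English description precedes it below -/
import Mathlib

section
/- Coercivity of the energy: let η > 0. There exist constants c₁ > 0 and c₂ > 0 depending only on η such that for every smooth 2π-periodic function h : ℝ² → ℝ, c₁ ‖Δh‖₂² − c₂ ≤ ∫_Q (−(1/2) log(1+|∇h|²) + (1/2) η² (Δh)²) dx ≤ (1/2) η² ‖Δh‖₂². -/
open MeasureTheory

noncomputable section

/-- The domain `ℝ²` with the Euclidean norm. -/
abbrev R2 := EuclideanSpace ℝ (Fin 2)

/-- The fundamental cell `Q = [-π, π]²`. -/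
def Q : Set R2 := {x | ∀ i, x i ∈ Set.Icc (-Real.pi) Real.pi}

/-- A function on `ℝ²` is `2π`-periodic if it is invariant under translation by
`2π e` for each standard basis vector `e`. -/
def Periodic2 {E : Type*} (u : R2 → E) : Prop :=
  ∀ (x : R2) (i : Fin 2), u (x + EuclideanSpace.single i (2 * Real.pi)) = u x

/-- Partial derivative in the `i`-th coordinate direction. -/
def pd (i : Fin 2) (u : R2 → ℝ) (x : R2) : ℝ :=
  fderiv ℝ u x (EuclideanSpace.single i 1)

/-- The gradient as a plain vector in `Fin 2 → ℝ`. -/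
def gradv (u : R2 → ℝ) (x : R2) : Fin 2 → ℝ := fun i => pd i u x

/-- The Laplacian. -/
def lap (u : R2 → ℝ) (x : R2) : ℝ := ∑ i, pd i (pd i u) x

/-- The bilaplacian `Δ²u = Δ(Δu)`. -/
def bilap (u : R2 → ℝ) (x : R2) : ℝ := lap (lap u) x

/-- The divergence of a vector field. -/
def divg (F : R2 → Fin 2 → ℝ) (x : R2) : ℝ := ∑ i, pd i (fun y => F y i) x

/-- The nonlinearity `g(z) = -z/(1+|z|²)` acting on vectors. -/
def gvec (v : Fin 2 → ℝ) : Fin 2 → ℝ := fun i => -v i / (1 + ∑ k, v k ^ 2)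

/-- The BDF3/EP3 scheme with parameters `η, τ`:
`(11h^{n+1} - 18hⁿ + 9h^{n-1} - 2h^{n-2})/(6τ)
  = -η² Δ²h^{n+1} + ∇·(g(3∇hⁿ - 3∇h^{n-1} + ∇h^{n-2}))` pointwise. -/
def BDF3EP3 (η τ : ℝ) (h : ℕ → R2 → ℝ) : Prop :=
  ∀ n : ℕ, 2 ≤ n → ∀ x : R2,
    (11 * h (n + 1) x - 18 * h n x + 9 * h (n - 1) x - 2 * h (n - 2) x) / (6 * τ)
      = -η ^ 2 * bilap (h (n + 1)) x
        + divg (fun y =>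
            gvec (fun i => 3 * gradv (h n) y i - 3 * gradv (h (n - 1)) y i
              + gradv (h (n - 2)) y i)) x

/-- The squared `L²` norm over `Q`. -/
def L2sq (u : R2 → ℝ) : ℝ := ∫ x in Q, (u x) ^ 2

/-- The `L²` norm over `Q`. -/
def L2norm (u : R2 → ℝ) : ℝ := Real.sqrt (L2sq u)

/-- `‖∇u‖₂² = ∫_Q |∇u|² dx`. -/
def gradL2sq (u : R2 → ℝ) : ℝ := ∫ x in Q, ∑ i, (pd i u x) ^ 2

/-- The energy `E(u) = ∫_Q (-(1/2) log(1+|∇u|²) + (1/2) η² (Δu)²) dx`. -/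
def energy (η : ℝ) (u : R2 → ℝ) : ℝ :=
  ∫ x in Q, (-(1 / 2) * Real.log (1 + ∑ i, (pd i u x) ^ 2)
    + (1 / 2) * η ^ 2 * (lap u x) ^ 2)

-- chunk 1: basic lemmas
section basics

variable {u f g : R2 → ℝ} {i j : Fin 2}

lemma contDiff_pd (hu : ContDiff ℝ (⊤ : ℕ∞) u) (i : Fin 2) : ContDiff ℝ (⊤ : ℕ∞) (pd i u) := by
  exact (hu.fderiv_right (by norm_cast)).clm_apply contDiff_const

lemma wtop1 : (1 : WithTop ℕ∞) ≤ ((⊤:ℕ∞) : WithTop ℕ∞) := by norm_cast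
lemma wtop2 : (2 : WithTop ℕ∞) ≤ ((⊤:ℕ∞) : WithTop ℕ∞) := by norm_cast
lemma wtopadd : ((⊤:ℕ∞) : WithTop ℕ∞) + 1 ≤ ((⊤:ℕ∞) : WithTop ℕ∞) := by norm_cast

lemma contDiff_fderiv (hu : ContDiff ℝ (⊤ : ℕ∞) u) :
    ContDiff ℝ (⊤ : ℕ∞) (fderiv ℝ u) := hu.fderiv_right wtopadd

lemma periodic_fderiv (hp : Periodic2 u) (x : R2) (i : Fin 2) :
    fderiv ℝ u (x + EuclideanSpace.single i (2 * Real.pi)) = fderiv ℝ u x := by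
  by_cases hd : DifferentiableAt ℝ u (x + EuclideanSpace.single i (2 * Real.pi))
  · have h1 : HasFDerivAt (fun y : R2 => y + EuclideanSpace.single i (2 * Real.pi))
        (ContinuousLinearMap.id ℝ R2) x := by
      simpa using (hasFDerivAt_id x).add_const (EuclideanSpace.single i (2 * Real.pi))
    have h2 := hd.hasFDerivAt.comp x h1
    have h3 : (fun y : R2 => u (y + EuclideanSpace.single i (2 * Real.pi))) = u := by
      funext y; exact hp y i
    rw [ContinuousLinearMap.comp_id] at h2
    rw [show (u ∘ fun y : R2 => y + EuclideanSpace.single i (2 * Real.pi)) = u from h3] at h2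
    exact (h2.fderiv).symm ▸ rfl
  · have hd2 : ¬ DifferentiableAt ℝ u x := by
      intro hx
      apply hd
      have h1 : HasFDerivAt (fun y : R2 => y + (-EuclideanSpace.single i (2 * Real.pi)))
          (ContinuousLinearMap.id ℝ R2)
          (x + EuclideanSpace.single i (2 * Real.pi)) := by
        simpa using (hasFDerivAt_id _).add_const (-EuclideanSpace.single i (2 * Real.pi))
      have hx' : HasFDerivAt u (fderiv ℝ u x)
          (x + EuclideanSpace.single i (2 * Real.pi) + -EuclideanSpace.single i (2 * Real.pi)) := by
        simpa using hx.hasFDerivAt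
      have h2 := hx'.comp (x + EuclideanSpace.single i (2 * Real.pi)) h1
      have h3 : (u ∘ fun y : R2 => y + (-EuclideanSpace.single i (2 * Real.pi))) = u := by
        funext y
        show u (y - EuclideanSpace.single i (2 * Real.pi)) = u y
        conv_rhs => rw [← sub_add_cancel y (EuclideanSpace.single i (2 * Real.pi)), hp]
      rw [h3] at h2
      simpa using h2.differentiableAt
    rw [fderiv_zero_of_not_differentiableAt hd, fderiv_zero_of_not_differentiableAt hd2]

lemma periodic_pd (hp : Periodic2 u) (i : Fin 2) : Periodic2 (pd i u) := by
  intro x j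
  unfold pd
  rw [periodic_fderiv hp x j]

lemma pd_eq_snd (hu : ContDiff ℝ (⊤ : ℕ∞) u) (x : R2) (i j : Fin 2) :
    pd i (pd j u) x
      = fderiv ℝ (fderiv ℝ u) x (EuclideanSpace.single i 1) (EuclideanSpace.single j 1) := by
  unfold pd
  have hc : DifferentiableAt ℝ (fderiv ℝ u) x :=
    ((contDiff_fderiv hu).differentiable (ne_of_gt (lt_of_lt_of_le zero_lt_one wtop1))) x
  rw [fderiv_clm_apply hc (differentiableAt_const _)]
  simp

lemma pd_comm (hu : ContDiff ℝ (⊤ : ℕ∞) u) (x : R2) :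
    pd i (pd j u) x = pd j (pd i u) x := by
  rw [pd_eq_snd hu, pd_eq_snd hu]
  exact (hu.contDiffAt.isSymmSndFDerivAt (by simpa using wtop2)) _ _

lemma pd_mul (hf : ContDiff ℝ (⊤ : ℕ∞) f) (hg : ContDiff ℝ (⊤ : ℕ∞) g) (x : R2) :
    pd i (fun y => f y * g y) x = pd i f x * g x + f x * pd i g x := by
  unfold pd
  rw [fderiv_fun_mul (hf.differentiable (ne_of_gt (lt_of_lt_of_le zero_lt_one wtop1)) x) (hg.differentiable (ne_of_gt (lt_of_lt_of_le zero_lt_one wtop1)) x)]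
  simp [mul_comm]
  ring

end basics

-- chunk 2: coordinates
section coords

def E0 : R2 := EuclideanSpace.single (0 : Fin 2) (1:ℝ)
def E1 : R2 := EuclideanSpace.single (1 : Fin 2) (1:ℝ)

def Tm (p : ℝ × ℝ) : R2 := p.1 • E0 + p.2 • E1

lemma Tm_apply (p : ℝ × ℝ) (i : Fin 2) : Tm p i = if i = 0 then p.1 else p.2 := by
  fin_cases i <;> simp [Tm, E0, E1, EuclideanSpace.single_apply]

lemma Tm_add_left (a b t : ℝ) :
    Tm (a + t, b) = Tm (a, b) + EuclideanSpace.single 0 t := by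
  have : EuclideanSpace.single (0 : Fin 2) t = t • E0 := by
    ext j; simp [E0, EuclideanSpace.single_apply, PiLp.smul_apply, mul_ite]
  rw [this]; unfold Tm; push_cast; module

lemma Tm_add_right (a b t : ℝ) :
    Tm (a, b + t) = Tm (a, b) + EuclideanSpace.single 1 t := by
  have : EuclideanSpace.single (1 : Fin 2) t = t • E1 := by
    ext j; simp [E1, EuclideanSpace.single_apply, PiLp.smul_apply, mul_ite]
  rw [this]; unfold Tm; push_cast; module

lemma continuous_Tm : Continuous Tm := by
  unfold Tm; fun_prop

def Tme : (ℝ × ℝ) ≃ᵐ R2 :=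
  (MeasurableEquiv.piFinTwo (fun _ => ℝ)).symm.trans
    (MeasurableEquiv.toLp 2 (Fin 2 → ℝ)).symm.symm

lemma Tme_eq_Tm : (Tme : ℝ × ℝ → R2) = Tm := by
  funext p
  ext i
  fin_cases i <;>
    simp [Tme, Tm_apply, MeasurableEquiv.piFinTwo, MeasurableEquiv.coe_toLp]

lemma measurePreserving_Tm : MeasurePreserving Tm (volume : Measure (ℝ × ℝ)) volume := by
  rw [← Tme_eq_Tm]
  exact ((EuclideanSpace.volume_preserving_symm_measurableEquiv_toLp (Fin 2)).symm).comp
    ((volume_preserving_piFinTwo (fun _ : Fin 2 => ℝ)).symm)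

lemma measurableEmbedding_Tm : MeasurableEmbedding Tm := by
  rw [← Tme_eq_Tm]; exact Tme.measurableEmbedding

lemma Tm_preimage_Q :
    Tm ⁻¹' Q = (Set.Icc (-Real.pi) Real.pi) ×ˢ (Set.Icc (-Real.pi) Real.pi) := by
  ext p
  simp only [Set.mem_preimage, Q, Set.mem_setOf_eq, Set.mem_prod, Fin.forall_fin_two, Tm_apply]
  simp

end coords

-- chunk 3: integration over Q
section fubini

open Real

local notation "I" => Set.Icc (-Real.pi) Real.pi

lemma isCompact_Q : IsCompact Q := by
  have : Q = Tm '' (I ×ˢ I) := by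
    rw [← Tm_preimage_Q, Set.image_preimage_eq _ (by rw [← Tme_eq_Tm]; exact Tme.surjective)]
  rw [this]
  exact ((isCompact_Icc).prod isCompact_Icc).image continuous_Tm

lemma integral_Q_eq (f : R2 → ℝ) :
    ∫ x in Q, f x = ∫ p in I ×ˢ I, f (Tm p) := by
  rw [← measurePreserving_Tm.setIntegral_preimage_emb measurableEmbedding_Tm, Tm_preimage_Q]

lemma integrableOn_prod (f : R2 → ℝ) (hf : Continuous f) :
    IntegrableOn (fun p => f (Tm p)) (I ×ˢ I) := by
  exact (hf.comp continuous_Tm).continuousOn.integrableOn_compact ((isCompact_Icc).prod isCompact_Icc)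

lemma integral_Q (f : R2 → ℝ) (hf : Continuous f) :
    ∫ x in Q, f x = ∫ a in I, ∫ b in I, f (Tm (a, b)) := by
  rw [integral_Q_eq]
  exact setIntegral_prod _ (integrableOn_prod f hf)

lemma integral_Q' (f : R2 → ℝ) (hf : Continuous f) :
    ∫ x in Q, f x = ∫ b in I, ∫ a in I, f (Tm (a, b)) := by
  rw [integral_Q_eq]
  have h := integrableOn_prod f hf
  rw [IntegrableOn, Measure.volume_eq_prod, ← Measure.prod_restrict] at h
  rw [show (∫ p in I ×ˢ I, f (Tm p)) = ∫ p, f (Tm p) ∂((volume.restrict I).prod (volume.restrict I)) from by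
    rw [Measure.prod_restrict, ← Measure.volume_eq_prod]]
  exact integral_prod_symm _ h

end fubini

-- chunk 4: slices and line integrals
section lines

open Real intervalIntegral

local notation "I" => Set.Icc (-Real.pi) Real.pi

lemma hasDerivAt_slice0 (f : R2 → ℝ) (hf : ContDiff ℝ (⊤ : ℕ∞) f) (a b : ℝ) :
    HasDerivAt (fun t => f (Tm (t, b))) (pd 0 f (Tm (a, b))) a := by
  have hγ : HasDerivAt (fun t : ℝ => Tm (t, b)) E0 a := by
    have : (fun t : ℝ => Tm (t, b)) = fun t : ℝ => t • E0 + (b • E1) := rfl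
    rw [this]
    simpa using ((hasDerivAt_id a).smul_const E0).add_const (b • E1)
  have hd := (hf.differentiable (ne_of_gt (lt_of_lt_of_le zero_lt_one wtop1)) (Tm (a, b))).hasFDerivAt
  simpa [pd, E0, Function.comp_def] using hd.comp_hasDerivAt a hγ

lemma hasDerivAt_slice1 (f : R2 → ℝ) (hf : ContDiff ℝ (⊤ : ℕ∞) f) (a b : ℝ) :
    HasDerivAt (fun t => f (Tm (a, t))) (pd 1 f (Tm (a, b))) b := by
  have hγ : HasDerivAt (fun t : ℝ => Tm (a, t)) E1 b := by
    have : (fun t : ℝ => Tm (a, t)) = fun t : ℝ => a • E0 + t • E1 := rfl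
    rw [this]
    simpa using ((hasDerivAt_id b).smul_const E1).const_add (a • E0)
  have hd := (hf.differentiable (ne_of_gt (lt_of_lt_of_le zero_lt_one wtop1)) (Tm (a, b))).hasFDerivAt
  simpa [pd, E1, Function.comp_def] using hd.comp_hasDerivAt b hγ

lemma line_pd0 (f : R2 → ℝ) (hf : ContDiff ℝ (⊤ : ℕ∞) f) (hp : Periodic2 f) (b : ℝ) :
    ∫ a in I, pd 0 f (Tm (a, b)) = 0 := by
  rw [MeasureTheory.integral_Icc_eq_integral_Ioc,
    ← intervalIntegral.integral_of_le (by linarith [Real.pi_pos] : -π ≤ π)]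
  have h := intervalIntegral.integral_eq_sub_of_hasDerivAt
    (a := -π) (b := π)
    (f := fun t => f (Tm (t, b))) (f' := fun t => pd 0 f (Tm (t, b)))
    (fun t _ => hasDerivAt_slice0 f hf t b)
    (((contDiff_pd hf 0).continuous.comp (continuous_Tm.comp
      (by fun_prop : Continuous (fun t : ℝ => ((t : ℝ), b))))).intervalIntegrable (-π) π)
  rw [h]
  have : Tm (π, b) = Tm (-π, b) + EuclideanSpace.single 0 (2 * π) := by
    rw [← Tm_add_left]; ring_nf
  simp only [h, this, hp (Tm (-π, b)) 0, sub_self]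

lemma line_pd1 (f : R2 → ℝ) (hf : ContDiff ℝ (⊤ : ℕ∞) f) (hp : Periodic2 f) (a : ℝ) :
    ∫ b in I, pd 1 f (Tm (a, b)) = 0 := by
  rw [MeasureTheory.integral_Icc_eq_integral_Ioc,
    ← intervalIntegral.integral_of_le (by linarith [Real.pi_pos] : -π ≤ π)]
  have h := intervalIntegral.integral_eq_sub_of_hasDerivAt
    (a := -π) (b := π)
    (f := fun t => f (Tm (a, t))) (f' := fun t => pd 1 f (Tm (a, t)))
    (fun t _ => hasDerivAt_slice1 f hf a t)
    (((contDiff_pd hf 1).continuous.comp (continuous_Tm.comp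
      (by fun_prop : Continuous (fun t : ℝ => (a, (t : ℝ)))))).intervalIntegrable (-π) π)
  rw [h]
  have : Tm (a, π) = Tm (a, -π) + EuclideanSpace.single 1 (2 * π) := by
    rw [← Tm_add_right]; ring_nf
  simp only [h, this, hp (Tm (a, -π)) 1, sub_self]

end lines

-- chunk 5: integration by parts
section ibp

open Real

local notation "I" => Set.Icc (-Real.pi) Real.pi

lemma integrableOn_Q (f : R2 → ℝ) (hf : Continuous f) : IntegrableOn f Q :=
  hf.continuousOn.integrableOn_compact isCompact_Q

lemma integral_pd_mul_add (i : Fin 2) (f g : R2 → ℝ)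
    (hf : ContDiff ℝ (⊤ : ℕ∞) f) (hg : ContDiff ℝ (⊤ : ℕ∞) g)
    (hpf : Periodic2 f) (hpg : Periodic2 g) :
    ∫ x in Q, (pd i f x * g x + f x * pd i g x) = 0 := by
  have hfg : ContDiff ℝ (⊤ : ℕ∞) (fun x => f x * g x) := hf.mul hg
  have hpfg : Periodic2 (fun x => f x * g x) := fun x j => by simp [hpf x j, hpg x j]
  have hcont : Continuous (fun x => pd i f x * g x + f x * pd i g x) := by
    exact (((contDiff_pd hf i).continuous.mul hg.continuous).add
      (hf.continuous.mul (contDiff_pd hg i).continuous))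
  have hrw : ∀ x, pd i f x * g x + f x * pd i g x = pd i (fun y => f y * g y) x := by
    intro x; rw [pd_mul hf hg]
  fin_cases i
  · show ∫ x in Q, (pd 0 f x * g x + f x * pd 0 g x) = 0
    rw [integral_Q' (fun x => pd 0 f x * g x + f x * pd 0 g x) ((((contDiff_pd hf 0).continuous.mul hg.continuous).add
      (hf.continuous.mul (contDiff_pd hg 0).continuous)))]
    have h0 : ∀ b : ℝ, (∫ a in I, (pd 0 f (Tm (a, b)) * g (Tm (a, b))
        + f (Tm (a, b)) * pd 0 g (Tm (a, b)))) = 0 := by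
      intro b
      rw [show (fun a => pd 0 f (Tm (a, b)) * g (Tm (a, b))
          + f (Tm (a, b)) * pd 0 g (Tm (a, b)))
          = fun a => pd 0 (fun y => f y * g y) (Tm (a, b)) from
          funext fun a => (pd_mul hf hg _).symm]
      exact line_pd0 _ hfg hpfg b
    simp only [h0, integral_zero]
  · show ∫ x in Q, (pd 1 f x * g x + f x * pd 1 g x) = 0
    rw [integral_Q (fun x => pd 1 f x * g x + f x * pd 1 g x) ((((contDiff_pd hf 1).continuous.mul hg.continuous).add
      (hf.continuous.mul (contDiff_pd hg 1).continuous)))]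
    have h1 : ∀ a : ℝ, (∫ b in I, (pd 1 f (Tm (a, b)) * g (Tm (a, b))
        + f (Tm (a, b)) * pd 1 g (Tm (a, b)))) = 0 := by
      intro a
      rw [show (fun b => pd 1 f (Tm (a, b)) * g (Tm (a, b))
          + f (Tm (a, b)) * pd 1 g (Tm (a, b)))
          = fun b => pd 1 (fun y => f y * g y) (Tm (a, b)) from
          funext fun b => (pd_mul hf hg _).symm]
      exact line_pd1 _ hfg hpfg a
    simp only [h1, integral_zero]

lemma ibp (i : Fin 2) (f g : R2 → ℝ)
    (hf : ContDiff ℝ (⊤ : ℕ∞) f) (hg : ContDiff ℝ (⊤ : ℕ∞) g)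
    (hpf : Periodic2 f) (hpg : Periodic2 g) :
    ∫ x in Q, pd i f x * g x = - ∫ x in Q, f x * pd i g x := by
  have h1 : IntegrableOn (fun x => pd i f x * g x) Q :=
    integrableOn_Q _ ((contDiff_pd hf i).continuous.mul hg.continuous)
  have h2 : IntegrableOn (fun x => f x * pd i g x) Q :=
    integrableOn_Q _ (hf.continuous.mul (contDiff_pd hg i).continuous)
  have h := integral_pd_mul_add i f g hf hg hpf hpg
  rw [integral_add h1 h2] at h
  linarith

end ibp

-- chunk 6: mixed second derivative term is nonnegative
section mixed

lemma measurableSet_Q : MeasurableSet Q := isCompact_Q.isClosed.measurableSet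

lemma mixed_nonneg (u : R2 → ℝ) (hu : ContDiff ℝ (⊤ : ℕ∞) u) (hp : Periodic2 u) :
    0 ≤ ∫ x in Q, pd 0 (pd 0 u) x * pd 1 (pd 1 u) x := by
  set p0 := pd 0 u with hp0
  set p1 := pd 1 u with hp1
  have hu0 : ContDiff ℝ (⊤ : ℕ∞) p0 := contDiff_pd hu 0
  have hu1 : ContDiff ℝ (⊤ : ℕ∞) p1 := contDiff_pd hu 1
  have hq0 : Periodic2 p0 := periodic_pd hp 0
  have hq1 : Periodic2 p1 := periodic_pd hp 1
  have h1 : ∫ x in Q, pd 0 p0 x * pd 1 p1 x = - ∫ x in Q, p0 x * pd 0 (pd 1 p1) x :=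
    ibp 0 p0 (pd 1 p1) hu0 (contDiff_pd hu1 1) hq0 (periodic_pd hq1 1)
  have h2 : (fun x => p0 x * pd 0 (pd 1 p1) x) = fun x => p0 x * pd 1 (pd 0 p1) x := by
    funext x; rw [pd_comm hu1]
  have h3 : ∫ x in Q, pd 1 p0 x * pd 0 p1 x = - ∫ x in Q, p0 x * pd 1 (pd 0 p1) x :=
    ibp 1 p0 (pd 0 p1) hu0 (contDiff_pd hu1 0) hq0 (periodic_pd hq1 0)
  have h4 : (fun x => pd 1 p0 x * pd 0 p1 x) = fun x => pd 0 p1 x * pd 0 p1 x := by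
    funext x; rw [pd_comm hu]
  rw [h1, h2, ← h3, h4]
  exact setIntegral_nonneg measurableSet_Q (fun x _ => mul_self_nonneg _)

end mixed

-- chunk 7: 1D estimate
section oneD

open Real intervalIntegral

lemma oneD {V W : ℝ → ℝ} (hV : ∀ t, HasDerivAt V (W t) t) (hW : Continuous W)
    (hmean : ∫ t in Set.Icc (-π) π, V t = 0) {s : ℝ} (hs : s ∈ Set.Icc (-π) π) :
    |V s| ≤ ∫ t in (-π)..π, |W t| := by
  have hpi : -π < π := by linarith [Real.pi_pos]
  have hVc : Continuous V := by
    rw [continuous_iff_continuousAt]; exact fun t => (hV t).continuousAt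
  -- find a zero of V
  set F : ℝ → ℝ := fun t => ∫ x in (-π)..t, V x with hF
  have hFd : ∀ t, HasDerivAt F (V t) t := fun t =>
    intervalIntegral.integral_hasDerivAt_right (hVc.intervalIntegrable _ _)
      (hVc.stronglyMeasurableAtFilter _ _) hVc.continuousAt
  have hFc : ContinuousOn F (Set.Icc (-π) π) := by
    apply Continuous.continuousOn
    rw [continuous_iff_continuousAt]; exact fun t => (hFd t).continuousAt
  have hF0 : F (-π) = F π := by
    have : F π = 0 := by
      rw [hF]
      simp only []
      rw [intervalIntegral.integral_of_le hpi.le, ← MeasureTheory.integral_Icc_eq_integral_Ioc]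
      exact hmean
    rw [this, hF]; simp
  obtain ⟨c, hc, hc0⟩ := exists_deriv_eq_zero hpi hFc hF0
  have hVc0 : V c = 0 := by rw [← (hFd c).deriv]; exact hc0
  -- FTC from c to s
  have hftc : V s - V c = ∫ t in c..s, W t :=
    (intervalIntegral.integral_eq_sub_of_hasDerivAt (fun t _ => hV t)
      (hW.intervalIntegrable _ _)).symm
  have hcI : c ∈ Set.Icc (-π) π := Set.mem_Icc_of_Ioo hc
  have habs : |∫ t in c..s, W t| ≤ ∫ t in (-π)..π, |W t| := by
    rcases le_total c s with h | h
    · calc |∫ t in c..s, W t| ≤ ∫ t in c..s, |W t| :=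
            intervalIntegral.abs_integral_le_integral_abs h
        _ ≤ ∫ t in (-π)..π, |W t| := by
            apply intervalIntegral.integral_mono_interval hcI.1 h hs.2
            · exact Filter.Eventually.of_forall fun t => abs_nonneg _
            · exact (hW.abs.intervalIntegrable _ _)
    · rw [intervalIntegral.integral_symm, abs_neg]
      calc |∫ t in s..c, W t| ≤ ∫ t in s..c, |W t| :=
            intervalIntegral.abs_integral_le_integral_abs h
        _ ≤ ∫ t in (-π)..π, |W t| := by
            apply intervalIntegral.integral_mono_interval hs.1 h hcI.2
            · exact Filter.Eventually.of_forall fun t => abs_nonneg _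
            · exact (hW.abs.intervalIntegrable _ _)
  calc |V s| = |V s - V c| := by rw [hVc0, sub_zero]
    _ = |∫ t in c..s, W t| := by rw [hftc]
    _ ≤ ∫ t in (-π)..π, |W t| := habs

end oneD

-- chunk 8: pointwise bounds on first derivatives
section pointwise

open Real

local notation "I" => Set.Icc (-Real.pi) Real.pi

variable {u : R2 → ℝ}

lemma abs_pd0_le (hu : ContDiff ℝ (⊤ : ℕ∞) u) (hp : Periodic2 u) {a : ℝ} (b : ℝ)
    (ha : a ∈ I) :
    |pd 0 u (Tm (a, b))| ≤ ∫ t in (-π)..π, |pd 0 (pd 0 u) (Tm (t, b))| := by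
  exact oneD (fun t => hasDerivAt_slice0 (pd 0 u) (contDiff_pd hu 0) t b)
    ((contDiff_pd (contDiff_pd hu 0) 0).continuous.comp
      (continuous_Tm.comp (by fun_prop)))
    (line_pd0 u hu hp b) ha

lemma abs_pd1_le (hu : ContDiff ℝ (⊤ : ℕ∞) u) (hp : Periodic2 u) (a : ℝ) {b : ℝ}
    (hb : b ∈ I) :
    |pd 1 u (Tm (a, b))| ≤ ∫ t in (-π)..π, |pd 1 (pd 1 u) (Tm (a, t))| := by
  exact oneD (fun t => hasDerivAt_slice1 (pd 1 u) (contDiff_pd hu 1) a t)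
    ((contDiff_pd (contDiff_pd hu 1) 1).continuous.comp
      (continuous_Tm.comp (by fun_prop)))
    (line_pd1 u hu hp a) hb

end pointwise

-- chunk 9: L1 bounds
section L1

open Real

local notation "I" => Set.Icc (-Real.pi) Real.pi

variable {u : R2 → ℝ}

lemma volI : (volume I).toReal = 2 * π := by
  rw [Real.volume_Icc, ENNReal.toReal_ofReal (by linarith [Real.pi_pos])]
  ring

lemma L1_pd0 (hu : ContDiff ℝ (⊤ : ℕ∞) u) (hp : Periodic2 u) :
    ∫ x in Q, |pd 0 u x| ≤ (2 * π) * ∫ x in Q, |pd 0 (pd 0 u) x| := by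
  have hpi : -π ≤ π := by linarith [Real.pi_pos]
  have hc0 : Continuous (fun x : R2 => |pd 0 u x|) := (contDiff_pd hu 0).continuous.abs
  have hc00 : Continuous (fun x : R2 => |pd 0 (pd 0 u) x|) :=
    (contDiff_pd (contDiff_pd hu 0) 0).continuous.abs
  rw [integral_Q' _ hc0, integral_Q' _ hc00]
  have hI1 := integrableOn_prod _ hc0
  have hI2 := integrableOn_prod _ hc00
  rw [IntegrableOn, Measure.volume_eq_prod, ← Measure.prod_restrict] at hI1 hI2
  have hint1 : Integrable (fun b => ∫ a in I, |pd 0 u (Tm (a, b))|) (volume.restrict I) :=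
    hI1.integral_prod_right
  have hint2 : Integrable (fun b => ∫ a in I, |pd 0 (pd 0 u) (Tm (a, b))|)
      (volume.restrict I) := hI2.integral_prod_right
  have key : ∀ b : ℝ, (∫ a in I, |pd 0 u (Tm (a, b))|)
      ≤ (2 * π) * ∫ a in I, |pd 0 (pd 0 u) (Tm (a, b))| := by
    intro b
    have hCb : (∫ t in (-π)..π, |pd 0 (pd 0 u) (Tm (t, b))|)
        = ∫ a in I, |pd 0 (pd 0 u) (Tm (a, b))| := by
      rw [intervalIntegral.integral_of_le hpi, ← MeasureTheory.integral_Icc_eq_integral_Ioc]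
    calc ∫ a in I, |pd 0 u (Tm (a, b))|
        ≤ ∫ _a in I, (∫ t in (-π)..π, |pd 0 (pd 0 u) (Tm (t, b))|) := by
          apply setIntegral_mono_on
          · exact ((hc0.comp (continuous_Tm.comp
              (by fun_prop : Continuous fun a : ℝ => ((a : ℝ), b))))).continuousOn.integrableOn_compact
              isCompact_Icc
          · exact integrableOn_const measure_Icc_lt_top.ne
          · exact measurableSet_Icc
          · intro a ha; exact abs_pd0_le hu hp b ha
      _ = (2 * π) * ∫ a in I, |pd 0 (pd 0 u) (Tm (a, b))| := by
          rw [setIntegral_const, hCb, measureReal_def, volI, smul_eq_mul]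
  calc ∫ b in I, (∫ a in I, |pd 0 u (Tm (a, b))|)
      ≤ ∫ b in I, (2 * π) * ∫ a in I, |pd 0 (pd 0 u) (Tm (a, b))| :=
        integral_mono hint1 (hint2.const_mul _) key
    _ = (2 * π) * ∫ b in I, ∫ a in I, |pd 0 (pd 0 u) (Tm (a, b))| := by
        rw [integral_const_mul]

lemma L1_pd1 (hu : ContDiff ℝ (⊤ : ℕ∞) u) (hp : Periodic2 u) :
    ∫ x in Q, |pd 1 u x| ≤ (2 * π) * ∫ x in Q, |pd 1 (pd 1 u) x| := by
  have hpi : -π ≤ π := by linarith [Real.pi_pos]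
  have hc0 : Continuous (fun x : R2 => |pd 1 u x|) := (contDiff_pd hu 1).continuous.abs
  have hc00 : Continuous (fun x : R2 => |pd 1 (pd 1 u) x|) :=
    (contDiff_pd (contDiff_pd hu 1) 1).continuous.abs
  rw [integral_Q _ hc0, integral_Q _ hc00]
  have hI1 := integrableOn_prod _ hc0
  have hI2 := integrableOn_prod _ hc00
  rw [IntegrableOn, Measure.volume_eq_prod, ← Measure.prod_restrict] at hI1 hI2
  have hint1 : Integrable (fun a => ∫ b in I, |pd 1 u (Tm (a, b))|) (volume.restrict I) :=
    hI1.integral_prod_left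
  have hint2 : Integrable (fun a => ∫ b in I, |pd 1 (pd 1 u) (Tm (a, b))|)
      (volume.restrict I) := hI2.integral_prod_left
  have key : ∀ a : ℝ, (∫ b in I, |pd 1 u (Tm (a, b))|)
      ≤ (2 * π) * ∫ b in I, |pd 1 (pd 1 u) (Tm (a, b))| := by
    intro a
    have hCb : (∫ t in (-π)..π, |pd 1 (pd 1 u) (Tm (a, t))|)
        = ∫ b in I, |pd 1 (pd 1 u) (Tm (a, b))| := by
      rw [intervalIntegral.integral_of_le hpi, ← MeasureTheory.integral_Icc_eq_integral_Ioc]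
    calc ∫ b in I, |pd 1 u (Tm (a, b))|
        ≤ ∫ _b in I, (∫ t in (-π)..π, |pd 1 (pd 1 u) (Tm (a, t))|) := by
          apply setIntegral_mono_on
          · exact ((hc0.comp (continuous_Tm.comp
              (by fun_prop : Continuous fun b : ℝ => (a, (b : ℝ)))))).continuousOn.integrableOn_compact
              isCompact_Icc
          · exact integrableOn_const measure_Icc_lt_top.ne
          · exact measurableSet_Icc
          · intro b hb; exact abs_pd1_le hu hp a hb
      _ = (2 * π) * ∫ b in I, |pd 1 (pd 1 u) (Tm (a, b))| := by
          rw [setIntegral_const, hCb, measureReal_def, volI, smul_eq_mul]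
  calc ∫ a in I, (∫ b in I, |pd 1 u (Tm (a, b))|)
      ≤ ∫ a in I, (2 * π) * ∫ b in I, |pd 1 (pd 1 u) (Tm (a, b))| :=
        integral_mono hint1 (hint2.const_mul _) key
    _ = (2 * π) * ∫ a in I, ∫ b in I, |pd 1 (pd 1 u) (Tm (a, b))| := by
        rw [integral_const_mul]

end L1

-- chunk 10: auxiliary inequalities
section aux

open Real

lemma log_aux (a b : ℝ) : Real.log (1 + (a ^ 2 + b ^ 2)) ≤ 2 * |a| + 2 * |b| := by
  have h1 : (0:ℝ) < 1 + (a ^ 2 + b ^ 2) := by positivity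
  have ha : (0:ℝ) < 1 + |a| := by positivity
  have hb : (0:ℝ) < 1 + |b| := by positivity
  have h2 : 1 + (a ^ 2 + b ^ 2) ≤ (1 + |a|) ^ 2 * (1 + |b|) ^ 2 := by
    nlinarith [abs_nonneg a, abs_nonneg b, sq_abs a, sq_abs b, mul_nonneg (abs_nonneg a) (abs_nonneg b)]
  have h3 := Real.log_le_log h1 h2
  have h4 : Real.log ((1 + |a|) ^ 2 * (1 + |b|) ^ 2)
      = 2 * Real.log (1 + |a|) + 2 * Real.log (1 + |b|) := by
    rw [Real.log_mul (by positivity) (by positivity), Real.log_pow, Real.log_pow]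
    push_cast; ring
  have h5 : Real.log (1 + |a|) ≤ |a| := by
    have := Real.log_le_sub_one_of_pos ha; linarith
  have h6 : Real.log (1 + |b|) ≤ |b| := by
    have := Real.log_le_sub_one_of_pos hb; linarith
  linarith

lemma abs_le_quad {δ : ℝ} (hδ : 0 < δ) (c : ℝ) : |c| ≤ δ * c ^ 2 + 1 / (4 * δ) := by
  have h := sq_nonneg (2 * δ * |c| - 1)
  have h2 : (0:ℝ) < 4 * δ := by linarith
  have h3 : (0:ℝ) < δ⁻¹ := by positivity
  have key : 4 * δ * |c| ≤ 4 * δ * (δ * c ^ 2 + 1 / (4 * δ)) := by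
    have h4 : 4 * δ * (δ * c ^ 2 + 1 / (4 * δ)) = 4 * δ ^ 2 * c ^ 2 + 1 := by
      field_simp
    have h5 : 4 * δ ^ 2 * c ^ 2 - 4 * δ * |c| + 1 ≥ 0 := by
      nlinarith [sq_nonneg (2 * δ * |c| - 1), sq_abs c]
    linarith
  exact le_of_mul_le_mul_left key h2

lemma volQ : (volume Q).toReal = (2 * π) * (2 * π) := by
  have h1 : volume Q = volume (Tm ⁻¹' Q) :=
    (measurePreserving_Tm.measure_preimage measurableSet_Q.nullMeasurableSet).symm
  rw [h1, Tm_preimage_Q, Measure.volume_eq_prod, Measure.prod_prod, Real.volume_Icc,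
    ENNReal.toReal_mul]
  rw [ENNReal.toReal_ofReal (by linarith [Real.pi_pos])]
  ring_nf

end aux

/-- coercivity of the energy. For `η > 0` there are constants
`c₁, c₂ > 0` depending only on `η` such that for every smooth `2π`-periodic `h`,
`c₁ ‖Δh‖₂² - c₂ ≤ E(h) ≤ (1/2) η² ‖Δh‖₂²`. -/
theorem energy_coercive (η : ℝ) (hη : 0 < η) :
    ∃ c₁ > (0 : ℝ), ∃ c₂ > (0 : ℝ), ∀ u : R2 → ℝ,
      ContDiff ℝ (⊤ : ℕ∞) u → Periodic2 u →
        c₁ * L2sq (lap u) - c₂ ≤ energy η u ∧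
        energy η u ≤ (1 / 2) * η ^ 2 * L2sq (lap u) := by
  have hπ := Real.pi_pos
  refine ⟨η ^ 2 / 4, by positivity, 32 * Real.pi ^ 4 / η ^ 2 + 1, by positivity, ?_⟩
  intro u hu hp
  set δ : ℝ := η ^ 2 / (8 * Real.pi) with hδdef
  have hδ : 0 < δ := by positivity
  have hpd_cont : ∀ i, Continuous (pd i u) := fun i => (contDiff_pd hu i).continuous
  have hpdd_cont : ∀ i, Continuous (pd i (pd i u)) :=
    fun i => (contDiff_pd (contDiff_pd hu i) i).continuous
  have hs_cont : Continuous (fun x : R2 => 1 + ∑ i, pd i u x ^ 2) :=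
    continuous_const.add (continuous_finset_sum _ fun i _ => ((hpd_cont i).pow 2))
  have hs_pos : ∀ x : R2, 0 < 1 + ∑ i, pd i u x ^ 2 := by
    intro x
    have : (0:ℝ) ≤ ∑ i, pd i u x ^ 2 := Finset.sum_nonneg fun i _ => sq_nonneg _
    linarith
  have hlog_cont : Continuous (fun x : R2 => Real.log (1 + ∑ i, pd i u x ^ 2)) :=
    hs_cont.log fun x => (hs_pos x).ne'
  have hlap_cont : Continuous (lap u) := by
    show Continuous fun x => ∑ i, pd i (pd i u) x
    exact continuous_finset_sum _ fun i _ => hpdd_cont i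
  -- split energy
  have hIA : IntegrableOn (fun x : R2 => -(1/2 : ℝ) * Real.log (1 + ∑ i, pd i u x ^ 2)) Q :=
    integrableOn_Q _ (continuous_const.mul hlog_cont)
  have hIB : IntegrableOn (fun x : R2 => (1/2 : ℝ) * η ^ 2 * (lap u x) ^ 2) Q :=
    integrableOn_Q _ (continuous_const.mul (hlap_cont.pow 2))
  have hsplit : energy η u
      = (∫ x in Q, -(1/2 : ℝ) * Real.log (1 + ∑ i, pd i u x ^ 2))
        + ∫ x in Q, (1/2 : ℝ) * η ^ 2 * (lap u x) ^ 2 :=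
    integral_add hIA hIB
  have hAval : (∫ x in Q, -(1/2 : ℝ) * Real.log (1 + ∑ i, pd i u x ^ 2))
      = -(1/2) * ∫ x in Q, Real.log (1 + ∑ i, pd i u x ^ 2) := integral_const_mul _ _
  have hBval : (∫ x in Q, (1/2 : ℝ) * η ^ 2 * (lap u x) ^ 2)
      = (1/2) * η ^ 2 * L2sq (lap u) := by
    unfold L2sq
    exact integral_const_mul _ _
  set Lg : ℝ := ∫ x in Q, Real.log (1 + ∑ i, pd i u x ^ 2) with hLgdef
  have hLg_nonneg : 0 ≤ Lg :=
    setIntegral_nonneg measurableSet_Q fun x _ => Real.log_nonneg (by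
      have : (0:ℝ) ≤ ∑ i, pd i u x ^ 2 := Finset.sum_nonneg fun i _ => sq_nonneg _
      linarith)
  -- quadratic bound for L1 of second derivatives
  have hquad : ∀ w : R2 → ℝ, Continuous w →
      ∫ x in Q, |w x| ≤ δ * (∫ x in Q, (w x) ^ 2) + Real.pi ^ 2 / δ := by
    intro w hw
    have h1 : IntegrableOn (fun x : R2 => δ * (w x) ^ 2 + 1 / (4 * δ)) Q :=
      integrableOn_Q _ ((continuous_const.mul (hw.pow 2)).add continuous_const)
    calc ∫ x in Q, |w x|
        ≤ ∫ x in Q, (δ * (w x) ^ 2 + 1 / (4 * δ)) :=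
          setIntegral_mono_on (integrableOn_Q _ hw.abs) h1 measurableSet_Q
            (fun x _ => abs_le_quad hδ _)
      _ = δ * (∫ x in Q, (w x) ^ 2) + Real.pi ^ 2 / δ := by
          rw [integral_add ((integrableOn_Q (fun x => w x ^ 2) (hw.pow 2)).const_mul δ)
            (integrableOn_const isCompact_Q.measure_lt_top.ne),
            integral_const_mul, setIntegral_const, measureReal_def, volQ, smul_eq_mul]
          have hδ' : δ ≠ 0 := ne_of_gt hδ
          have hc : 2 * Real.pi * (2 * Real.pi) * (1 / (4 * δ)) = Real.pi ^ 2 / δ := by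
            field_simp
            ring
          rw [hc]
  -- pointwise log bound and integration
  have hIabs0 : IntegrableOn (fun x : R2 => |pd 0 u x|) Q := integrableOn_Q _ (hpd_cont 0).abs
  have hIabs1 : IntegrableOn (fun x : R2 => |pd 1 u x|) Q := integrableOn_Q _ (hpd_cont 1).abs
  have hLg1 : Lg ≤ 2 * (∫ x in Q, |pd 0 u x|) + 2 * ∫ x in Q, |pd 1 u x| := by
    calc Lg ≤ ∫ x in Q, (2 * |pd 0 u x| + 2 * |pd 1 u x|) := by
          apply setIntegral_mono_on (integrableOn_Q _ hlog_cont)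
            (integrableOn_Q _ ((continuous_const.mul (hpd_cont 0).abs).add
              (continuous_const.mul (hpd_cont 1).abs))) measurableSet_Q
          intro x _
          have hsum : ∑ i, pd i u x ^ 2 = pd 0 u x ^ 2 + pd 1 u x ^ 2 :=
            Fin.sum_univ_two _
          rw [hsum]
          exact log_aux _ _
      _ = 2 * (∫ x in Q, |pd 0 u x|) + 2 * ∫ x in Q, |pd 1 u x| := by
          rw [integral_add (hIabs0.const_mul 2) (hIabs1.const_mul 2),
            integral_const_mul, integral_const_mul]
  -- second derivative sum vs laplacian
  have hD : (∫ x in Q, (pd 0 (pd 0 u) x) ^ 2) + (∫ x in Q, (pd 1 (pd 1 u) x) ^ 2)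
      ≤ L2sq (lap u) := by
    have hlapval : L2sq (lap u) = ∫ x in Q, ((pd 0 (pd 0 u) x) ^ 2 + (pd 1 (pd 1 u) x) ^ 2
        + 2 * (pd 0 (pd 0 u) x * pd 1 (pd 1 u) x)) := by
      unfold L2sq
      congr 1
      funext x
      show (∑ i, pd i (pd i u) x) ^ 2 = _
      rw [Fin.sum_univ_two]
      ring
    have i1 : IntegrableOn (fun x : R2 => (pd 0 (pd 0 u) x) ^ 2) Q :=
      integrableOn_Q _ ((hpdd_cont 0).pow 2)
    have i2 : IntegrableOn (fun x : R2 => (pd 1 (pd 1 u) x) ^ 2) Q :=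
      integrableOn_Q _ ((hpdd_cont 1).pow 2)
    have i3 : IntegrableOn (fun x : R2 => 2 * (pd 0 (pd 0 u) x * pd 1 (pd 1 u) x)) Q :=
      integrableOn_Q _ (continuous_const.mul ((hpdd_cont 0).mul (hpdd_cont 1)))
    have i12 : IntegrableOn (fun x : R2 => pd 0 (pd 0 u) x ^ 2 + pd 1 (pd 1 u) x ^ 2) Q :=
      integrableOn_Q _ (((hpdd_cont 0).pow 2).add ((hpdd_cont 1).pow 2))
    rw [hlapval, integral_add i12 i3, integral_add i1 i2, integral_const_mul]
    have := mixed_nonneg u hu hp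
    linarith
  -- combine
  have h00 := hquad _ (hpdd_cont 0)
  have h11 := hquad _ (hpdd_cont 1)
  have hL10 := L1_pd0 hu hp
  have hL11 := L1_pd1 hu hp
  have hnn0 : 0 ≤ ∫ x in Q, (pd 0 (pd 0 u) x) ^ 2 :=
    setIntegral_nonneg measurableSet_Q fun x _ => sq_nonneg _
  have hnn1 : 0 ≤ ∫ x in Q, (pd 1 (pd 1 u) x) ^ 2 :=
    setIntegral_nonneg measurableSet_Q fun x _ => sq_nonneg _
  have hLgfinal : Lg ≤ (η ^ 2 / 2) * L2sq (lap u) + 64 * Real.pi ^ 4 / η ^ 2 := by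
    have h4π : (0:ℝ) ≤ 4 * Real.pi := by positivity
    have c1 := mul_le_mul_of_nonneg_left h00 h4π
    have c2 := mul_le_mul_of_nonneg_left h11 h4π
    have c3 := mul_le_mul_of_nonneg_left hD (by positivity : (0:ℝ) ≤ (4 * Real.pi) * δ)
    have e3 : (4 * Real.pi * δ) * (L2sq (lap u)) + (8 * Real.pi) * (Real.pi ^ 2 / δ)
        = (η ^ 2 / 2) * L2sq (lap u) + 64 * Real.pi ^ 4 / η ^ 2 := by
      rw [hδdef]
      have hπ' : Real.pi ≠ 0 := ne_of_gt hπ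
      have hη' : η ≠ 0 := ne_of_gt hη
      field_simp
      ring
    calc Lg ≤ 2 * (∫ x in Q, |pd 0 u x|) + 2 * ∫ x in Q, |pd 1 u x| := hLg1
      _ ≤ 2 * (2 * Real.pi * ∫ x in Q, |pd 0 (pd 0 u) x|)
          + 2 * (2 * Real.pi * ∫ x in Q, |pd 1 (pd 1 u) x|) :=
          add_le_add (mul_le_mul_of_nonneg_left hL10 (by norm_num))
            (mul_le_mul_of_nonneg_left hL11 (by norm_num))
      _ = (4 * Real.pi) * (∫ x in Q, |pd 0 (pd 0 u) x|)
          + (4 * Real.pi) * (∫ x in Q, |pd 1 (pd 1 u) x|) := by ring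
      _ ≤ (4 * Real.pi) * (δ * (∫ x in Q, (pd 0 (pd 0 u) x) ^ 2) + Real.pi ^ 2 / δ)
          + (4 * Real.pi) * (δ * (∫ x in Q, (pd 1 (pd 1 u) x) ^ 2) + Real.pi ^ 2 / δ) :=
          add_le_add c1 c2
      _ = (4 * Real.pi * δ) * ((∫ x in Q, (pd 0 (pd 0 u) x) ^ 2)
          + (∫ x in Q, (pd 1 (pd 1 u) x) ^ 2)) + (8 * Real.pi) * (Real.pi ^ 2 / δ) := by ring
      _ ≤ (4 * Real.pi * δ) * (L2sq (lap u)) + (8 * Real.pi) * (Real.pi ^ 2 / δ) :=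
          add_le_add c3 le_rfl
      _ = (η ^ 2 / 2) * L2sq (lap u) + 64 * Real.pi ^ 4 / η ^ 2 := e3
  constructor
  · rw [hsplit, hAval, hBval]
    have hhalf : (1/2 : ℝ) * Lg ≤ (1/2) * ((η ^ 2 / 2) * L2sq (lap u) + 64 * Real.pi ^ 4 / η ^ 2) :=
      by linarith [hLgfinal]
    have e4 : (1/2 : ℝ) * ((η ^ 2 / 2) * L2sq (lap u) + 64 * Real.pi ^ 4 / η ^ 2)
        = (η ^ 2 / 4) * L2sq (lap u) + 32 * Real.pi ^ 4 / η ^ 2 := by ring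
    rw [e4] at hhalf
    linarith [hhalf]
  · rw [hsplit, hAval, hBval]
    linarith [hLg_nonneg]
end
end

section
/- Root structure of the BDF3 characteristic cubic: for every s₀ with 0 < s₀ < 1/11 there exists λ_a ∈ (0,1) such that for every s with 0 < s ≤ s₀ there exist λ₁ ∈ ℝ and μ ∈ ℂ with: the cubic polynomial λ³ − 18sλ² + 9sλ − 2s factors over ℂ as (λ − λ₁)(λ − μ)(λ − μ̄); 2.1·s < λ₁ ≤ λ_a < 1; and |μ| = |μ̄| ≤ √(2/2.1) < 1. -/
set_option maxHeartbeats 800000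


noncomputable section

/-- root structure of the BDF3 characteristic cubic. For every
`0 < s₀ < 1/11` there is `λ_a ∈ (0,1)` such that for every `0 < s ≤ s₀` the
cubic `λ³ - 18sλ² + 9sλ - 2s` factors over `ℂ` as `(λ - λ₁)(λ - μ)(λ - μ̄)` with
a real root `λ₁` satisfying `2.1 s < λ₁ ≤ λ_a < 1` and `|μ| = |μ̄| ≤ √(2/2.1) < 1`. -/
theorem bdf3_cubic_roots (s₀ : ℝ) (hs₀ : 0 < s₀) (hs₀' : s₀ < 1 / 11) :
    ∃ lamA : ℝ, 0 < lamA ∧ lamA < 1 ∧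
      ∀ s : ℝ, 0 < s → s ≤ s₀ →
        ∃ (lam₁ : ℝ) (μ : ℂ),
          (∀ lam : ℂ, lam ^ 3 - 18 * (s : ℂ) * lam ^ 2 + 9 * (s : ℂ) * lam - 2 * (s : ℂ)
            = (lam - (lam₁ : ℂ)) * (lam - μ) * (lam - (starRingEnd ℂ) μ)) ∧
          2.1 * s < lam₁ ∧ lam₁ ≤ lamA ∧
          ‖μ‖ ≤ Real.sqrt (2 / 2.1) ∧ Real.sqrt (2 / 2.1) < 1 := by
  set t : ℝ := (11 * s₀ + 1) / 2 with ht_def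
  have ht0 : 0 < t := by positivity
  have ht1 : t < 1 := by simp only [ht_def]; linarith
  set lamA : ℝ := t ^ ((1 : ℝ) / 3) with hlamA_def
  have hlamA_pos : 0 < lamA := Real.rpow_pos_of_pos ht0 _
  have hlamA_lt1 : lamA < 1 := Real.rpow_lt_one ht0.le ht1 (by norm_num)
  have hcube : lamA ^ 3 = t := by
    rw [hlamA_def, ← Real.rpow_natCast (t ^ ((1 : ℝ) / 3)) 3, ← Real.rpow_mul ht0.le]
    norm_num
  have hthalf : (1 : ℝ) / 2 ≤ t := by simp only [ht_def]; linarith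
  have h07 : (0.7 : ℝ) < lamA := by nlinarith [hlamA_pos, hcube, hthalf, sq_nonneg lamA]
  refine ⟨lamA, hlamA_pos, hlamA_lt1, ?_⟩
  intro s hs hss₀
  have hs11 : s < 1 / 11 := lt_of_le_of_lt hss₀ hs₀'
  -- the real cubic function
  set f : ℝ → ℝ := fun x => x ^ 3 - 18 * s * x ^ 2 + 9 * s * x - 2 * s with hf_def
  have hfa : f (2.1 * s) < 0 := by
    simp only [hf_def]
    nlinarith [mul_pos hs hs, sq_nonneg (140.238 * s - 18.9), mul_pos (mul_pos hs hs) hs]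
  have hfb : 0 < f lamA := by
    simp only [hf_def]
    have hprod : 0 ≤ s * ((1 - lamA) * (1 + 2 * lamA)) := by
      apply mul_nonneg hs.le
      apply mul_nonneg (by linarith) (by linarith)
    nlinarith [hcube, hss₀, hs₀']
  have hle : 2.1 * s ≤ lamA := by nlinarith
  have hcont : ContinuousOn f (Set.Icc (2.1 * s) lamA) := by
    apply Continuous.continuousOn; simp only [hf_def]; continuity
  have hivt := intermediate_value_Icc hle hcont
  have h0mem : (0 : ℝ) ∈ Set.Icc (f (2.1 * s)) (f lamA) := ⟨hfa.le, hfb.le⟩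
  obtain ⟨lam₁, hmem, hroot⟩ := hivt h0mem
  obtain ⟨hlam₁_ge, hlam₁_le⟩ := hmem
  have hroot : lam₁ ^ 3 - 18 * s * lam₁ ^ 2 + 9 * s * lam₁ - 2 * s = 0 := hroot
  have hlam₁_gt : 2.1 * s < lam₁ := by
    rcases lt_or_eq_of_le hlam₁_ge with h | h
    · exact h
    · exfalso; rw [← h] at hroot; simp only [hf_def] at hfa; linarith
  have hlam₁_pos : 0 < lam₁ := by nlinarith
  -- quadratic factor coefficients
  set c : ℝ := lam₁ ^ 2 - 18 * s * lam₁ + 9 * s with hc_def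
  have hlc : lam₁ * c = 2 * s := by simp only [hc_def]; linear_combination hroot
  have hcpos : 0 < c := by
    by_contra h
    push_neg at h
    have : lam₁ * c ≤ 0 := mul_nonpos_of_nonneg_of_nonpos hlam₁_pos.le h
    linarith
  have h1 : 2.1 * s * c ≤ 2 * s := by
    have := mul_le_mul_of_nonneg_right hlam₁_gt.le hcpos.le
    linarith
  have hcle : c ≤ 2 / 2.1 := by
    by_contra h
    push_neg at h
    have h2 : 2 * s < 2.1 * s * c := by nlinarith [mul_pos hs (sub_pos.mpr h)]
    linarith
  -- discriminant identity: the quadratic factor has negative discriminant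
  have hkey : (3 * lam₁ ^ 2 - 36 * s * lam₁ + 9 * s) ^ 2 *
      ((lam₁ - 18 * s) ^ 2 - 4 * c) = -108 * s ^ 2 + 2916 * s ^ 3 - 20412 * s ^ 4 := by
    simp only [hc_def]
    linear_combination (-27 * lam₁ ^ 3 + 486 * s * lam₁ ^ 2 - 243 * s * lam₁
      - 23328 * s ^ 3 + 2916 * s ^ 2 - 54 * s) * hroot
  have hdiscneg : -108 * s ^ 2 + 2916 * s ^ 3 - 20412 * s ^ 4 < 0 := by
    nlinarith [sq_nonneg (378 * s - 27), mul_pos hs hs]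
  have hD : (lam₁ - 18 * s) ^ 2 < 4 * c := by
    by_contra h
    push_neg at h
    have h2 : 0 ≤ (3 * lam₁ ^ 2 - 36 * s * lam₁ + 9 * s) ^ 2 *
        ((lam₁ - 18 * s) ^ 2 - 4 * c) := mul_nonneg (sq_nonneg _) (by linarith)
    rw [hkey] at h2
    linarith
  set d : ℝ := 4 * c - (lam₁ - 18 * s) ^ 2 with hd_def
  have hd_pos : 0 < d := by simp only [hd_def]; linarith
  set μ : ℂ := (((18 * s - lam₁) / 2 : ℝ) : ℂ) + ((Real.sqrt d / 2 : ℝ) : ℂ) * Complex.I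
    with hμ_def
  have hconj : (starRingEnd ℂ) μ
      = (((18 * s - lam₁) / 2 : ℝ) : ℂ) - ((Real.sqrt d / 2 : ℝ) : ℂ) * Complex.I := by
    simp only [hμ_def, map_add, map_mul, Complex.conj_ofReal, Complex.conj_I]
    ring
  have hsum : μ + (starRingEnd ℂ) μ = 18 * (s : ℂ) - (lam₁ : ℂ) := by
    rw [hμ_def, hconj]; push_cast; ring
  have hsq : (Real.sqrt d) ^ 2 = d := Real.sq_sqrt hd_pos.le
  have hsqC : ((Real.sqrt d : ℝ) : ℂ) ^ 2 = ((d : ℝ) : ℂ) := by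
    rw [← Complex.ofReal_pow, hsq]
  have hmul : μ * (starRingEnd ℂ) μ
      = (lam₁ : ℂ) ^ 2 - 18 * (s : ℂ) * (lam₁ : ℂ) + 9 * (s : ℂ) := by
    rw [hμ_def, hconj]
    rw [show ((((18 * s - lam₁) / 2 : ℝ) : ℂ) + ((Real.sqrt d / 2 : ℝ) : ℂ) * Complex.I) *
        ((((18 * s - lam₁) / 2 : ℝ) : ℂ) - ((Real.sqrt d / 2 : ℝ) : ℂ) * Complex.I)
        = (((18 * s - lam₁) / 2 : ℝ) : ℂ) ^ 2
          - ((Real.sqrt d : ℝ) : ℂ) ^ 2 / 4 * Complex.I ^ 2 by push_cast; ring]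
    rw [Complex.I_sq, hsqC]
    simp only [hd_def, hc_def]
    push_cast
    ring
  have hrootC : (lam₁ : ℂ) ^ 3 - 18 * (s : ℂ) * (lam₁ : ℂ) ^ 2 + 9 * (s : ℂ) * (lam₁ : ℂ)
      - 2 * (s : ℂ) = 0 := by
    have := congrArg (fun x : ℝ => (x : ℂ)) hroot
    push_cast at this
    convert this using 1 <;> push_cast <;> ring
  have habs : ‖μ‖ = Real.sqrt c := by
    rw [hμ_def, Complex.norm_add_mul_I]
    congr 1
    have : ((18 * s - lam₁) / 2) ^ 2 + (Real.sqrt d / 2) ^ 2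
        = ((18 * s - lam₁) ^ 2 + d) / 4 := by rw [div_pow, div_pow, hsq]; ring
    rw [this]; simp only [hd_def]; ring_nf
  have hsqrt_lt1 : Real.sqrt (2 / 2.1) < 1 := by
    rw [show (1 : ℝ) = Real.sqrt 1 by simp]
    exact Real.sqrt_lt_sqrt (by norm_num) (by norm_num)
  refine ⟨lam₁, μ, ?_, hlam₁_gt, hlam₁_le, ?_, hsqrt_lt1⟩
  · intro lam
    linear_combination (lam ^ 2 - (lam₁ : ℂ) * lam) * hsum + ((lam₁ : ℂ) - lam) * hmul + hrootC
  · rw [habs]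
    exact Real.sqrt_le_sqrt hcle
end
end
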